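/- For every nonzero real number ε, the alternating bilinear bracket on the 7-dimensional real vector space with basis X₁,…,X₇ obtained from the bracket of L_{7,3}² by adding the relation [X₄,X₅] = εX₆ satisfies the Jacobi identity, and the resulting Lie algebra is isomorphic to L_{7,4}. -/

import Mathlib

/-- Structure constants of `L_{7,3}²` (upper triangular part, 0-based indices). -/
def L732T {L : Type*} [AddCommGroup L] [Module ℝ L] (b : Fin 7 → L) : Fin 7 → Fin 7 → L :=
  fun i j =>
    if i = 0 ∧ j = 1 then (2 : ℝ) • b 1 else
    if i = 0 ∧ j = 2 then (-2 : ℝ) • b 2 else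
    if i = 1 ∧ j = 2 then b 0 else
    if i = 0 ∧ j = 3 then b 3 else
    if i = 0 ∧ j = 4 then -b 4 else
    if i = 1 ∧ j = 4 then b 3 else
    if i = 2 ∧ j = 3 then b 4 else
    if i = 3 ∧ j = 6 then b 3 else
    if i = 4 ∧ j = 6 then b 4 else
    if i = 5 ∧ j = 6 then (2 : ℝ) • b 5 else 0

/-- Structure constants of `L_{7,4}` (upper triangular part, 0-based indices). -/
def L74T {L : Type*} [AddCommGroup L] [Module ℝ L] (b : Fin 7 → L) : Fin 7 → Fin 7 → L :=
  fun i j =>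
    if i = 0 ∧ j = 1 then (2 : ℝ) • b 1 else
    if i = 0 ∧ j = 2 then (-2 : ℝ) • b 2 else
    if i = 1 ∧ j = 2 then b 0 else
    if i = 0 ∧ j = 3 then b 3 else
    if i = 0 ∧ j = 4 then -b 4 else
    if i = 1 ∧ j = 4 then b 3 else
    if i = 2 ∧ j = 3 then b 4 else
    if i = 3 ∧ j = 4 then b 5 else
    if i = 3 ∧ j = 6 then b 3 else
    if i = 4 ∧ j = 6 then b 4 else
    if i = 5 ∧ j = 6 then (2 : ℝ) • b 5 else 0

/-- The alternating table supported on a single pair `(i0, j0)` with value `v`. -/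
def skewPair {n : ℕ} {L : Type*} [AddCommGroup L] (i0 j0 : Fin n) (v : L) :
    Fin n → Fin n → L :=
  fun i j => if i = i0 ∧ j = j0 then v else if i = j0 ∧ j = i0 then -v else 0

/-- The bilinear map with `φ(X₄,X₅) = X₆` (0-based: `φ(b 3, b 4) = b 5`) on basis elements. -/
noncomputable def addRel45 {L : Type*} [LieRing L] [LieAlgebra ℝ L]
    (b : Module.Basis (Fin 7) ℝ L) : L →ₗ[ℝ] L →ₗ[ℝ] L :=
  b.constr ℝ fun i => b.constr ℝ fun j => skewPair 3 4 (b 5) i j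

attribute [local instance] LieRing.ofAssociativeRing

set_option maxHeartbeats 2000000 in
/-- For every `ε ≠ 0`, the bracket obtained from `L_{7,3}²` by adding the relation
`[X₄,X₅] = ε X₆` is alternating, satisfies the Jacobi identity, and the resulting Lie
algebra is isomorphic to `L_{7,4}`. -/
theorem L732_deformed_is_L74 (ε : ℝ) (hε : ε ≠ 0)
    (L : Type) [LieRing L] [LieAlgebra ℝ L]
    (b : Module.Basis (Fin 7) ℝ L) (hL : ∀ i j : Fin 7, i < j → ⁅b i, b j⁆ = L732T (⇑b) i j)
    (M : Type) [LieRing M] [LieAlgebra ℝ M]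
    (c : Module.Basis (Fin 7) ℝ M) (hM : ∀ i j : Fin 7, i < j → ⁅c i, c j⁆ = L74T (⇑c) i j) :
    (∀ X : L, ⁅X, X⁆ + ε • addRel45 b X X = 0) ∧
    (∀ X Y Z : L,
      (⁅X, ⁅Y, Z⁆ + ε • addRel45 b Y Z⁆ + ε • addRel45 b X (⁅Y, Z⁆ + ε • addRel45 b Y Z)) +
      (⁅Z, ⁅X, Y⁆ + ε • addRel45 b X Y⁆ + ε • addRel45 b Z (⁅X, Y⁆ + ε • addRel45 b X Y)) +
      (⁅Y, ⁅Z, X⁆ + ε • addRel45 b Z X⁆ + ε • addRel45 b Y (⁅Z, X⁆ + ε • addRel45 b Z X)) = 0) ∧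
    (∃ e : L ≃ₗ[ℝ] M, ∀ X Y : L, e (⁅X, Y⁆ + ε • addRel45 b X Y) = ⁅e X, e Y⁆) := by
  have hLzero : ∀ i j : Fin 7, j ≤ i → L732T (⇑b) i j = 0 := by
    intro i j hij
    simp only [L732T]
    repeat' rw [if_neg (by omega)]
  have hMzero : ∀ i j : Fin 7, j ≤ i → L74T (⇑c) i j = 0 := by
    intro i j hij
    simp only [L74T]
    repeat' rw [if_neg (by omega)]
  have hL' : ∀ i j : Fin 7, ⁅b i, b j⁆ = L732T (⇑b) i j - L732T (⇑b) j i := by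
    intro i j
    rcases lt_trichotomy i j with h | h | h
    · rw [hL i j h, hLzero j i h.le, sub_zero]
    · subst h; rw [hLzero i i le_rfl, sub_self, lie_self]
    · rw [← lie_skew, hL j i h, hLzero i j h.le, zero_sub]
  have hM' : ∀ i j : Fin 7, ⁅c i, c j⁆ = L74T (⇑c) i j - L74T (⇑c) j i := by
    intro i j
    rcases lt_trichotomy i j with h | h | h
    · rw [hM i j h, hMzero j i h.le, sub_zero]
    · subst h; rw [hMzero i i le_rfl, sub_self, lie_self]
    · rw [← lie_skew, hM j i h, hMzero i j h.le, zero_sub]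
  let f : L →ₗ[ℝ] M := b.constr ℝ (fun i => if i = 5 then ε⁻¹ • c 5 else c i)
  let g : M →ₗ[ℝ] L := c.constr ℝ (fun i => if i = 5 then ε • b 5 else b i)
  have hfb : ∀ i : Fin 7, f (b i) = if i = 5 then ε⁻¹ • c 5 else c i :=
    fun i => b.constr_basis ℝ _ i
  have hgc : ∀ i : Fin 7, g (c i) = if i = 5 then ε • b 5 else b i :=
    fun i => c.constr_basis ℝ _ i
  have hfg : f.comp g = LinearMap.id := by
    apply c.ext
    intro i
    fin_cases i <;>
      simp [hfb, hgc, smul_smul, inv_mul_cancel₀ hε, mul_inv_cancel₀ hε]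
  have hgf : g.comp f = LinearMap.id := by
    apply b.ext
    intro i
    fin_cases i <;>
      simp [hfb, hgc, smul_smul, mul_inv_cancel₀ hε, inv_mul_cancel₀ hε]
  have hA : ∀ i j : Fin 7, addRel45 b (b i) (b j) = skewPair 3 4 (b 5) i j := by
    intro i j
    simp [addRel45, Module.Basis.constr_basis]
  have key : ∀ i j : Fin 7,
      f (⁅b i, b j⁆ + ε • addRel45 b (b i) (b j)) = ⁅f (b i), f (b j)⁆ := by
    intro i j
    fin_cases i <;> fin_cases j <;>
      simp [hA, hL', hM', L732T, L74T, skewPair, hfb,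
        smul_smul, smul_sub, lie_smul, smul_lie, mul_inv_cancel₀ hε,
        inv_mul_cancel₀ hε, smul_comm, mul_comm]
  have main : ∀ X Y : L, f (⁅X, Y⁆ + ε • addRel45 b X Y) = ⁅f X, f Y⁆ := by
    have hB : (((LieModule.toEnd ℝ L L).toLinearMap + ε • addRel45 b).compr₂ f)
        = ((LieModule.toEnd ℝ M M).toLinearMap ∘ₗ f).compl₂ f := by
      apply b.ext; intro i
      apply b.ext; intro j
      have : f (⁅b i, b j⁆ + ε • addRel45 b (b i) (b j)) = ⁅f (b i), f (b j)⁆ := key i j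
      simpa [LinearMap.compr₂_apply, LinearMap.compl₂_apply] using this
    intro X Y
    have h1 := LinearMap.congr_fun (LinearMap.congr_fun hB X) Y
    simpa [LinearMap.compr₂_apply, LinearMap.compl₂_apply] using h1
  let e : L ≃ₗ[ℝ] M := LinearEquiv.ofLinear f g hfg hgf
  have he : ∀ X : L, e X = f X := fun X => rfl
  have einj : Function.Injective e := e.injective
  refine ⟨?_, ?_, ⟨e, ?_⟩⟩
  · intro X
    apply einj
    rw [he, main X X, map_zero, lie_self]
  · intro X Y Z
    apply einj
    rw [map_zero, he]
    rw [map_add, map_add]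
    simp only [main]
    have := lie_jacobi (f X) (f Y) (f Z)
    linear_combination (norm := abel) this
  · intro X Y
    rw [he, he, he, main]
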